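/- Let Q₁(u,w) = u³(1-w)² + w³(1-u)² and let Q₂(u,w) = -9u(u-3)³ + 3(81-270u+180u²-36u³+5u⁴)w + (-243+540u-270u²+18u³-5u⁴)w² - (u+3)(-27+45u-21u²+u³)w³ - (u-1)(-9+6u+u²)w⁴. Then the resultant of Q₁ and Q₂ with respect to w equals 32(u-1)³u⁶R(u), where R(u) = 531441 - 3188646u + 8148762u² - 11455506u³ + 9546255u⁴ - 4776408u⁵ + 1487889u⁶ - 406782u⁷ + 143856u⁸ - 32238u⁹ + 1593u¹⁰ - 180u¹¹ - 4u¹². -/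

import Mathlib

set_option maxHeartbeats 1600000

theorem det_fin_four_of (a b c d e f g h i j k l m n o p : ℝ) :
    Matrix.det !![a,b,c,d; e,f,g,h; i,j,k,l; m,n,o,p] =
      a*f*k*p - a*f*l*o - a*g*j*p + a*g*l*n + a*h*j*o - a*h*k*n
      - b*e*k*p + b*e*l*o + b*g*i*p - b*g*l*m - b*h*i*o + b*h*k*m
      + c*e*j*p - c*e*l*n - c*f*i*p + c*f*l*m + c*h*i*n - c*h*j*m
      - d*e*j*o + d*e*k*n + d*f*i*o - d*f*k*m - d*g*i*n + d*g*j*m := by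
  rw [Matrix.det_succ_row_zero]
  simp [Fin.sum_univ_succ, Matrix.det_fin_three, Fin.succAbove]
  ring

theorem sylv (b0 b1 b2 b3 d4 d3 d2 d1 d0 : ℝ) :
    Matrix.det (!![b0, b1, b2, b3, 0, 0, 0; 0, b0, b1, b2, b3, 0, 0; 0, 0, b0, b1, b2, b3, 0; 0, 0, 0, b0, b1, b2, b3; d4, d3, d2, d1, d0, 0, 0; 0, d4, d3, d2, d1, d0, 0; 0, 0, d4, d3, d2, d1, d0] : Matrix (Fin 7) (Fin 7) ℝ) =
      b0*b0*b0*b0*d0*d0*d0 - b0*b0*b0*b1*d0*d0*d1 - 2*b0*b0*b0*b2*d0*d0*d2 + b0*b0*b0*b2*d0*d1*d1 - 3*b0*b0*b0*b3*d0*d0*d3 + 3*b0*b0*b0*b3*d0*d1*d2 - b0*b0*b0*b3*d1*d1*d1 + b0*b0*b1*b1*d0*d0*d2 + 3*b0*b0*b1*b2*d0*d0*d3 - b0*b0*b1*b2*d0*d1*d2 + 4*b0*b0*b1*b3*d0*d0*d4 - b0*b0*b1*b3*d0*d1*d3 - 2*b0*b0*b1*b3*d0*d2*d2 + b0*b0*b1*b3*d1*d1*d2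 + 2*b0*b0*b2*b2*d0*d0*d4 - 2*b0*b0*b2*b2*d0*d1*d3 + b0*b0*b2*b2*d0*d2*d2 - 5*b0*b0*b2*b3*d0*d1*d4 + b0*b0*b2*b3*d0*d2*d3 + 2*b0*b0*b2*b3*d1*d1*d3 - b0*b0*b2*b3*d1*d2*d2 - 3*b0*b0*b3*b3*d0*d2*d4 + 3*b0*b0*b3*b3*d0*d3*d3 + 3*b0*b0*b3*b3*d1*d1*d4 - 3*b0*b0*b3*b3*d1*d2*d3 + b0*b0*b3*b3*d2*d2*d2 - b0*b1*b1*b1*d0*d0*d3 - 4*b0*b1*b1*b2*d0*d0*d4 + b0*b1*b1*b2*d0*d1*d3 + b0*b1*b1*b3*d0*d1*d4 + 2*b0*b1*b1*b3*d0*d2*d3 - b0*b1*b1*b3*d1*d1*d3 + 3*b0*b1*b2*b2*d0*d1*d4 - b0*b1*b2*b2*d0*d2*d3 + 4*b0*b1*b2*b3*d0*d2*d4 - 3*b0*b1*b2*b3*d0*d3*d3 - 3*b0*b1*b2*b3*d1*d1*d4 + b0*b1*b2*b3*d1*d2*d3 - 5*b0*b1*b3*b3*d0*d3*d4 + b0*b1*b3*b3*d1*d2*d4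 + 2*b0*b1*b3*b3*d1*d3*d3 - b0*b1*b3*b3*d2*d2*d3 - 2*b0*b2*b2*b2*d0*d2*d4 + b0*b2*b2*b2*d0*d3*d3 + b0*b2*b2*b3*d0*d3*d4 + 2*b0*b2*b2*b3*d1*d2*d4 - b0*b2*b2*b3*d1*d3*d3 + 4*b0*b2*b3*b3*d0*d4*d4 - b0*b2*b3*b3*d1*d3*d4 - 2*b0*b2*b3*b3*d2*d2*d4 + b0*b2*b3*b3*d2*d3*d3 - 3*b0*b3*b3*b3*d1*d4*d4 + 3*b0*b3*b3*b3*d2*d3*d4 - b0*b3*b3*b3*d3*d3*d3 + b1*b1*b1*b1*d0*d0*d4 - b1*b1*b1*b2*d0*d1*d4 - 2*b1*b1*b1*b3*d0*d2*d4 + b1*b1*b1*b3*d1*d1*d4 + b1*b1*b2*b2*d0*d2*d4 + 3*b1*b1*b2*b3*d0*d3*d4 - b1*b1*b2*b3*d1*d2*d4 + 2*b1*b1*b3*b3*d0*d4*d4 - 2*b1*b1*b3*b3*d1*d3*d4 + b1*b1*b3*b3*d2*d2*d4 - b1*b2*b2*b2*d0*d3*d4 - 4*b1*b2*b2*b3*d0*d4*d4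 + b1*b2*b2*b3*d1*d3*d4 + 3*b1*b2*b3*b3*d1*d4*d4 - b1*b2*b3*b3*d2*d3*d4 - 2*b1*b3*b3*b3*d2*d4*d4 + b1*b3*b3*b3*d3*d3*d4 + b2*b2*b2*b2*d0*d4*d4 - b2*b2*b2*b3*d1*d4*d4 + b2*b2*b3*b3*d2*d4*d4 - b2*b3*b3*b3*d3*d4*d4 + b3*b3*b3*b3*d4*d4*d4 := by
  have hM3456 : Matrix.det (!![b0, b1, b2, b3; d1, d0, 0, 0; d2, d1, d0, 0; d3, d2, d1, d0] : Matrix (Fin 4) (Fin 4) ℝ) = b0*d0*d0*d0 - b1*d0*d0*d1 - b2*d0*d0*d2 + b2*d0*d1*d1 - b3*d0*d0*d3 + 2*b3*d0*d1*d2 - b3*d1*d1*d1 := by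
    rw [det_fin_four_of]; ring
  have hM2356 : Matrix.det (!![b1, b2, b3, 0; b0, b1, b2, b3; d2, d1, d0, 0; d3, d2, d1, d0] : Matrix (Fin 4) (Fin 4) ℝ) = -b0*b2*d0*d0 + b0*b3*d0*d1 + b1*b1*d0*d0 - b1*b2*d0*d1 - 2*b1*b3*d0*d2 + b1*b3*d1*d1 + b2*b2*d0*d2 + b2*b3*d0*d3 - b2*b3*d1*d2 - b3*b3*d1*d3 + b3*b3*d2*d2 := by
    rw [det_fin_four_of]; ring
  have hM2346 : Matrix.det (!![b1, b2, b3, 0; b0, b1, b2, b3; d1, d0, 0, 0; d3, d2, d1, d0] : Matrix (Fin 4) (Fin 4) ℝ) = b0*b3*d0*d0 - b1*b2*d0*d0 + b2*b2*d0*d1 - b2*b3*d1*d1 - b3*b3*d0*d3 + b3*b3*d1*d2 := by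
    rw [det_fin_four_of]; ring
  have hM2345 : Matrix.det (!![b1, b2, b3, 0; b0, b1, b2, b3; d1, d0, 0, 0; d2, d1, d0, 0] : Matrix (Fin 4) (Fin 4) ℝ) = b1*b3*d0*d0 - b2*b3*d0*d1 - b3*b3*d0*d2 + b3*b3*d1*d1 := by
    rw [det_fin_four_of]; ring
  have hM23456 : Matrix.det (!![b0, b1, b2, b3, 0; 0, b0, b1, b2, b3; d2, d1, d0, 0, 0; d3, d2, d1, d0, 0; d4, d3, d2, d1, d0] : Matrix (Fin 5) (Fin 5) ℝ) = b0*b0*d0*d0*d0 - b0*b1*d0*d0*d1 - 2*b0*b2*d0*d0*d2 + b0*b2*d0*d1*d1 - 2*b0*b3*d0*d0*d3 + 3*b0*b3*d0*d1*d2 - b0*b3*d1*d1*d1 + b1*b1*d0*d0*d2 + b1*b2*d0*d0*d3 - b1*b2*d0*d1*d2 + b1*b3*d0*d0*d4 - 2*b1*b3*d0*d2*d2 + b1*b3*d1*d1*d2 - b2*b2*d0*d1*d3 + b2*b2*d0*d2*d2 - b2*b3*d0*d1*d4 + b2*b3*d0*d2*d3 + b2*b3*d1*d1*d3 - b2*b3*d1*d2*d2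 - b3*b3*d0*d2*d4 + b3*b3*d0*d3*d3 + b3*b3*d1*d1*d4 - 2*b3*b3*d1*d2*d3 + b3*b3*d2*d2*d2 := by
    have sM23456_0 : (!![b0, b1, b2, b3, 0; 0, b0, b1, b2, b3; d2, d1, d0, 0, 0; d3, d2, d1, d0, 0; d4, d3, d2, d1, d0] : Matrix (Fin 5) (Fin 5) ℝ).submatrix Fin.succ Fin.succ = !![b0, b1, b2, b3; d1, d0, 0, 0; d2, d1, d0, 0; d3, d2, d1, d0] := by
      ext a b; fin_cases a <;> fin_cases b <;> rfl
    have sM23456_2 : (!![b0, b1, b2, b3, 0; 0, b0, b1, b2, b3; d2, d1, d0, 0, 0; d3, d2, d1, d0, 0; d4, d3, d2, d1, d0] : Matrix (Fin 5) (Fin 5) ℝ).submatrix (Fin.succAbove 2) Fin.succ = !![b1, b2, b3, 0; b0, b1, b2, b3; d2, d1, d0, 0; d3, d2, d1, d0] := by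
      ext a b; fin_cases a <;> fin_cases b <;> rfl
    have sM23456_3 : (!![b0, b1, b2, b3, 0; 0, b0, b1, b2, b3; d2, d1, d0, 0, 0; d3, d2, d1, d0, 0; d4, d3, d2, d1, d0] : Matrix (Fin 5) (Fin 5) ℝ).submatrix (Fin.succ 2).succAbove Fin.succ = !![b1, b2, b3, 0; b0, b1, b2, b3; d1, d0, 0, 0; d3, d2, d1, d0] := by
      ext a b; fin_cases a <;> fin_cases b <;> rfl
    have sM23456_4 : (!![b0, b1, b2, b3, 0; 0, b0, b1, b2, b3; d2, d1, d0, 0, 0; d3, d2, d1, d0, 0; d4, d3, d2, d1, d0] : Matrix (Fin 5) (Fin 5) ℝ).submatrix (Fin.succ 2).succ.succAbove Fin.succ = !![b1, b2, b3, 0; b0, b1, b2, b3; d1, d0, 0, 0; d2, d1, d0, 0] := by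
      ext a b; fin_cases a <;> fin_cases b <;> rfl
    rw [Matrix.det_succ_column_zero]
    norm_num [Fin.sum_univ_succ, sM23456_0, hM3456, sM23456_2, hM2356, sM23456_3, hM2346, sM23456_4, hM2345]
    ring
  have hM1356 : Matrix.det (!![b2, b3, 0, 0; b0, b1, b2, b3; d2, d1, d0, 0; d3, d2, d1, d0] : Matrix (Fin 4) (Fin 4) ℝ) = -b0*b3*d0*d0 + b1*b2*d0*d0 - b2*b2*d0*d1 + b2*b3*d1*d1 + b3*b3*d0*d3 - b3*b3*d1*d2 := by
    rw [det_fin_four_of]; ring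
  have hM1236 : Matrix.det (!![b2, b3, 0, 0; b1, b2, b3, 0; b0, b1, b2, b3; d3, d2, d1, d0] : Matrix (Fin 4) (Fin 4) ℝ) = b0*b3*b3*d0 - 2*b1*b2*b3*d0 + b1*b3*b3*d1 + b2*b2*b2*d0 - b2*b2*b3*d1 + b2*b3*b3*d2 - b3*b3*b3*d3 := by
    rw [det_fin_four_of]; ring
  have hM1235 : Matrix.det (!![b2, b3, 0, 0; b1, b2, b3, 0; b0, b1, b2, b3; d2, d1, d0, 0] : Matrix (Fin 4) (Fin 4) ℝ) = b1*b3*b3*d0 - b2*b2*b3*d0 + b2*b3*b3*d1 - b3*b3*b3*d2 := by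
    rw [det_fin_four_of]; ring
  have hM12356 : Matrix.det (!![b1, b2, b3, 0, 0; b0, b1, b2, b3, 0; 0, b0, b1, b2, b3; d3, d2, d1, d0, 0; d4, d3, d2, d1, d0] : Matrix (Fin 5) (Fin 5) ℝ) = b0*b0*b3*d0*d0 - 2*b0*b1*b2*d0*d0 + b0*b1*b3*d0*d1 + b0*b2*b2*d0*d1 - b0*b2*b3*d1*d1 - 2*b0*b3*b3*d0*d3 + b0*b3*b3*d1*d2 + b1*b1*b1*d0*d0 - b1*b1*b2*d0*d1 - 2*b1*b1*b3*d0*d2 + b1*b1*b3*d1*d1 + b1*b2*b2*d0*d2 + 3*b1*b2*b3*d0*d3 - b1*b2*b3*d1*d2 + b1*b3*b3*d0*d4 - 2*b1*b3*b3*d1*d3 + b1*b3*b3*d2*d2 - b2*b2*b2*d0*d3 - b2*b2*b3*d0*d4 + b2*b2*b3*d1*d3 + b2*b3*b3*d1*d4 - b2*b3*b3*d2*d3 - b3*b3*b3*d2*d4 + b3*b3*b3*d3*d3 := by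
    have sM12356_0 : (!![b1, b2, b3, 0, 0; b0, b1, b2, b3, 0; 0, b0, b1, b2, b3; d3, d2, d1, d0, 0; d4, d3, d2, d1, d0] : Matrix (Fin 5) (Fin 5) ℝ).submatrix Fin.succ Fin.succ = !![b1, b2, b3, 0; b0, b1, b2, b3; d2, d1, d0, 0; d3, d2, d1, d0] := by
      ext a b; fin_cases a <;> fin_cases b <;> rfl
    have sM12356_1 : (!![b1, b2, b3, 0, 0; b0, b1, b2, b3, 0; 0, b0, b1, b2, b3; d3, d2, d1, d0, 0; d4, d3, d2, d1, d0] : Matrix (Fin 5) (Fin 5) ℝ).submatrix (Fin.succAbove 1) Fin.succ = !![b2, b3, 0, 0; b0, b1, b2, b3; d2, d1, d0, 0; d3, d2, d1, d0] := by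
      ext a b; fin_cases a <;> fin_cases b <;> rfl
    have sM12356_3 : (!![b1, b2, b3, 0, 0; b0, b1, b2, b3, 0; 0, b0, b1, b2, b3; d3, d2, d1, d0, 0; d4, d3, d2, d1, d0] : Matrix (Fin 5) (Fin 5) ℝ).submatrix (Fin.succ 2).succAbove Fin.succ = !![b2, b3, 0, 0; b1, b2, b3, 0; b0, b1, b2, b3; d3, d2, d1, d0] := by
      ext a b; fin_cases a <;> fin_cases b <;> rfl
    have sM12356_4 : (!![b1, b2, b3, 0, 0; b0, b1, b2, b3, 0; 0, b0, b1, b2, b3; d3, d2, d1, d0, 0; d4, d3, d2, d1, d0] : Matrix (Fin 5) (Fin 5) ℝ).submatrix (Fin.succ 2).succ.succAbove Fin.succ = !![b2, b3, 0, 0; b1, b2, b3, 0; b0, b1, b2, b3; d2, d1, d0, 0] := by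
      ext a b; fin_cases a <;> fin_cases b <;> rfl
    rw [Matrix.det_succ_column_zero]
    norm_num [Fin.sum_univ_succ, sM12356_0, hM2356, sM12356_1, hM1356, sM12356_3, hM1236, sM12356_4, hM1235]
    ring
  have hM1346 : Matrix.det (!![b2, b3, 0, 0; b0, b1, b2, b3; d1, d0, 0, 0; d3, d2, d1, d0] : Matrix (Fin 4) (Fin 4) ℝ) = -b2*b2*d0*d0 + 2*b2*b3*d0*d1 - b3*b3*d1*d1 := by
    rw [det_fin_four_of]; ring
  have hM1234 : Matrix.det (!![b2, b3, 0, 0; b1, b2, b3, 0; b0, b1, b2, b3; d1, d0, 0, 0] : Matrix (Fin 4) (Fin 4) ℝ) = b2*b3*b3*d0 - b3*b3*b3*d1 := by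
    rw [det_fin_four_of]; ring
  have hM12346 : Matrix.det (!![b1, b2, b3, 0, 0; b0, b1, b2, b3, 0; 0, b0, b1, b2, b3; d2, d1, d0, 0, 0; d4, d3, d2, d1, d0] : Matrix (Fin 5) (Fin 5) ℝ) = b0*b1*b3*d0*d0 + b0*b2*b2*d0*d0 - 2*b0*b2*b3*d0*d1 - b0*b3*b3*d0*d2 + b0*b3*b3*d1*d1 - b1*b1*b2*d0*d0 + b1*b2*b2*d0*d1 + 2*b1*b2*b3*d0*d2 - b1*b2*b3*d1*d1 - b1*b3*b3*d0*d3 - b2*b2*b2*d0*d2 + b2*b2*b3*d1*d2 + b2*b3*b3*d0*d4 - b2*b3*b3*d2*d2 - b3*b3*b3*d1*d4 + b3*b3*b3*d2*d3 := by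
    have sM12346_0 : (!![b1, b2, b3, 0, 0; b0, b1, b2, b3, 0; 0, b0, b1, b2, b3; d2, d1, d0, 0, 0; d4, d3, d2, d1, d0] : Matrix (Fin 5) (Fin 5) ℝ).submatrix Fin.succ Fin.succ = !![b1, b2, b3, 0; b0, b1, b2, b3; d1, d0, 0, 0; d3, d2, d1, d0] := by
      ext a b; fin_cases a <;> fin_cases b <;> rfl
    have sM12346_1 : (!![b1, b2, b3, 0, 0; b0, b1, b2, b3, 0; 0, b0, b1, b2, b3; d2, d1, d0, 0, 0; d4, d3, d2, d1, d0] : Matrix (Fin 5) (Fin 5) ℝ).submatrix (Fin.succAbove 1) Fin.succ = !![b2, b3, 0, 0; b0, b1, b2, b3; d1, d0, 0, 0; d3, d2, d1, d0] := by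
      ext a b; fin_cases a <;> fin_cases b <;> rfl
    have sM12346_3 : (!![b1, b2, b3, 0, 0; b0, b1, b2, b3, 0; 0, b0, b1, b2, b3; d2, d1, d0, 0, 0; d4, d3, d2, d1, d0] : Matrix (Fin 5) (Fin 5) ℝ).submatrix (Fin.succ 2).succAbove Fin.succ = !![b2, b3, 0, 0; b1, b2, b3, 0; b0, b1, b2, b3; d3, d2, d1, d0] := by
      ext a b; fin_cases a <;> fin_cases b <;> rfl
    have sM12346_4 : (!![b1, b2, b3, 0, 0; b0, b1, b2, b3, 0; 0, b0, b1, b2, b3; d2, d1, d0, 0, 0; d4, d3, d2, d1, d0] : Matrix (Fin 5) (Fin 5) ℝ).submatrix (Fin.succ 2).succ.succAbove Fin.succ = !![b2, b3, 0, 0; b1, b2, b3, 0; b0, b1, b2, b3; d1, d0, 0, 0] := by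
      ext a b; fin_cases a <;> fin_cases b <;> rfl
    rw [Matrix.det_succ_column_zero]
    norm_num [Fin.sum_univ_succ, sM12346_0, hM2346, sM12346_1, hM1346, sM12346_3, hM1236, sM12346_4, hM1234]
    ring
  have hM123456 : Matrix.det (!![b0, b1, b2, b3, 0, 0; 0, b0, b1, b2, b3, 0; 0, 0, b0, b1, b2, b3; d3, d2, d1, d0, 0, 0; d4, d3, d2, d1, d0, 0; 0, d4, d3, d2, d1, d0] : Matrix (Fin 6) (Fin 6) ℝ) = b0*b0*b0*d0*d0*d0 - b0*b0*b1*d0*d0*d1 - 2*b0*b0*b2*d0*d0*d2 + b0*b0*b2*d0*d1*d1 - 3*b0*b0*b3*d0*d0*d3 + 3*b0*b0*b3*d0*d1*d2 - b0*b0*b3*d1*d1*d1 + b0*b1*b1*d0*d0*d2 + 3*b0*b1*b2*d0*d0*d3 - b0*b1*b2*d0*d1*d2 + 2*b0*b1*b3*d0*d0*d4 - b0*b1*b3*d0*d1*d3 - 2*b0*b1*b3*d0*d2*d2 + b0*b1*b3*d1*d1*d2 + b0*b2*b2*d0*d0*d4 - 2*b0*b2*b2*d0*d1*d3 + b0*b2*b2*d0*d2*d2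 - 3*b0*b2*b3*d0*d1*d4 + b0*b2*b3*d0*d2*d3 + 2*b0*b2*b3*d1*d1*d3 - b0*b2*b3*d1*d2*d2 - 2*b0*b3*b3*d0*d2*d4 + 3*b0*b3*b3*d0*d3*d3 + 2*b0*b3*b3*d1*d1*d4 - 3*b0*b3*b3*d1*d2*d3 + b0*b3*b3*d2*d2*d2 - b1*b1*b1*d0*d0*d3 - b1*b1*b2*d0*d0*d4 + b1*b1*b2*d0*d1*d3 + 2*b1*b1*b3*d0*d2*d3 - b1*b1*b3*d1*d1*d3 + b1*b2*b2*d0*d1*d4 - b1*b2*b2*d0*d2*d3 + 2*b1*b2*b3*d0*d2*d4 - 3*b1*b2*b3*d0*d3*d3 - b1*b2*b3*d1*d1*d4 + b1*b2*b3*d1*d2*d3 - 2*b1*b3*b3*d0*d3*d4 + 2*b1*b3*b3*d1*d3*d3 - b1*b3*b3*d2*d2*d3 - b2*b2*b2*d0*d2*d4 + b2*b2*b2*d0*d3*d3 + b2*b2*b3*d0*d3*d4 + b2*b2*b3*d1*d2*d4 - b2*b2*b3*d1*d3*d3 + b2*b3*b3*d0*d4*d4 - b2*b3*b3*d1*d3*d4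 - b2*b3*b3*d2*d2*d4 + b2*b3*b3*d2*d3*d3 - b3*b3*b3*d1*d4*d4 + 2*b3*b3*b3*d2*d3*d4 - b3*b3*b3*d3*d3*d3 := by
    have sM123456_0 : (!![b0, b1, b2, b3, 0, 0; 0, b0, b1, b2, b3, 0; 0, 0, b0, b1, b2, b3; d3, d2, d1, d0, 0, 0; d4, d3, d2, d1, d0, 0; 0, d4, d3, d2, d1, d0] : Matrix (Fin 6) (Fin 6) ℝ).submatrix Fin.succ Fin.succ = !![b0, b1, b2, b3, 0; 0, b0, b1, b2, b3; d2, d1, d0, 0, 0; d3, d2, d1, d0, 0; d4, d3, d2, d1, d0] := by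
      ext a b; fin_cases a <;> fin_cases b <;> rfl
    have sM123456_3 : (!![b0, b1, b2, b3, 0, 0; 0, b0, b1, b2, b3, 0; 0, 0, b0, b1, b2, b3; d3, d2, d1, d0, 0, 0; d4, d3, d2, d1, d0, 0; 0, d4, d3, d2, d1, d0] : Matrix (Fin 6) (Fin 6) ℝ).submatrix (Fin.succ 2).succAbove Fin.succ = !![b1, b2, b3, 0, 0; b0, b1, b2, b3, 0; 0, b0, b1, b2, b3; d3, d2, d1, d0, 0; d4, d3, d2, d1, d0] := by
      ext a b; fin_cases a <;> fin_cases b <;> rfl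
    have sM123456_4 : (!![b0, b1, b2, b3, 0, 0; 0, b0, b1, b2, b3, 0; 0, 0, b0, b1, b2, b3; d3, d2, d1, d0, 0, 0; d4, d3, d2, d1, d0, 0; 0, d4, d3, d2, d1, d0] : Matrix (Fin 6) (Fin 6) ℝ).submatrix (Fin.succ 2).succ.succAbove Fin.succ = !![b1, b2, b3, 0, 0; b0, b1, b2, b3, 0; 0, b0, b1, b2, b3; d2, d1, d0, 0, 0; d4, d3, d2, d1, d0] := by
      ext a b; fin_cases a <;> fin_cases b <;> rfl
    rw [Matrix.det_succ_column_zero]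
    norm_num [Fin.sum_univ_succ, sM123456_0, hM23456, sM123456_3, hM12356, sM123456_4, hM12346]
    ring
  have hM0356 : Matrix.det (!![b3, 0, 0, 0; b0, b1, b2, b3; d2, d1, d0, 0; d3, d2, d1, d0] : Matrix (Fin 4) (Fin 4) ℝ) = b1*b3*d0*d0 - b2*b3*d0*d1 - b3*b3*d0*d2 + b3*b3*d1*d1 := by
    rw [det_fin_four_of]; ring
  have hM0236 : Matrix.det (!![b3, 0, 0, 0; b1, b2, b3, 0; b0, b1, b2, b3; d3, d2, d1, d0] : Matrix (Fin 4) (Fin 4) ℝ) = -b1*b3*b3*d0 + b2*b2*b3*d0 - b2*b3*b3*d1 + b3*b3*b3*d2 := by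
    rw [det_fin_four_of]; ring
  have hM0235 : Matrix.det (!![b3, 0, 0, 0; b1, b2, b3, 0; b0, b1, b2, b3; d2, d1, d0, 0] : Matrix (Fin 4) (Fin 4) ℝ) = -b2*b3*b3*d0 + b3*b3*b3*d1 := by
    rw [det_fin_four_of]; ring
  have hM02356 : Matrix.det (!![b2, b3, 0, 0, 0; b0, b1, b2, b3, 0; 0, b0, b1, b2, b3; d3, d2, d1, d0, 0; d4, d3, d2, d1, d0] : Matrix (Fin 5) (Fin 5) ℝ) = -b0*b1*b3*d0*d0 - b0*b2*b2*d0*d0 + 2*b0*b2*b3*d0*d1 + b0*b3*b3*d0*d2 - b0*b3*b3*d1*d1 + b1*b1*b2*d0*d0 - b1*b2*b2*d0*d1 - 2*b1*b2*b3*d0*d2 + b1*b2*b3*d1*d1 + b1*b3*b3*d0*d3 + b2*b2*b2*d0*d2 - b2*b2*b3*d1*d2 - b2*b3*b3*d0*d4 + b2*b3*b3*d2*d2 + b3*b3*b3*d1*d4 - b3*b3*b3*d2*d3 := by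
    have sM02356_0 : (!![b2, b3, 0, 0, 0; b0, b1, b2, b3, 0; 0, b0, b1, b2, b3; d3, d2, d1, d0, 0; d4, d3, d2, d1, d0] : Matrix (Fin 5) (Fin 5) ℝ).submatrix Fin.succ Fin.succ = !![b1, b2, b3, 0; b0, b1, b2, b3; d2, d1, d0, 0; d3, d2, d1, d0] := by
      ext a b; fin_cases a <;> fin_cases b <;> rfl
    have sM02356_1 : (!![b2, b3, 0, 0, 0; b0, b1, b2, b3, 0; 0, b0, b1, b2, b3; d3, d2, d1, d0, 0; d4, d3, d2, d1, d0] : Matrix (Fin 5) (Fin 5) ℝ).submatrix (Fin.succAbove 1) Fin.succ = !![b3, 0, 0, 0; b0, b1, b2, b3; d2, d1, d0, 0; d3, d2, d1, d0] := by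
      ext a b; fin_cases a <;> fin_cases b <;> rfl
    have sM02356_3 : (!![b2, b3, 0, 0, 0; b0, b1, b2, b3, 0; 0, b0, b1, b2, b3; d3, d2, d1, d0, 0; d4, d3, d2, d1, d0] : Matrix (Fin 5) (Fin 5) ℝ).submatrix (Fin.succ 2).succAbove Fin.succ = !![b3, 0, 0, 0; b1, b2, b3, 0; b0, b1, b2, b3; d3, d2, d1, d0] := by
      ext a b; fin_cases a <;> fin_cases b <;> rfl
    have sM02356_4 : (!![b2, b3, 0, 0, 0; b0, b1, b2, b3, 0; 0, b0, b1, b2, b3; d3, d2, d1, d0, 0; d4, d3, d2, d1, d0] : Matrix (Fin 5) (Fin 5) ℝ).submatrix (Fin.succ 2).succ.succAbove Fin.succ = !![b3, 0, 0, 0; b1, b2, b3, 0; b0, b1, b2, b3; d2, d1, d0, 0] := by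
      ext a b; fin_cases a <;> fin_cases b <;> rfl
    rw [Matrix.det_succ_column_zero]
    norm_num [Fin.sum_univ_succ, sM02356_0, hM2356, sM02356_1, hM0356, sM02356_3, hM0236, sM02356_4, hM0235]
    ring
  have hM0136 : Matrix.det (!![b3, 0, 0, 0; b2, b3, 0, 0; b0, b1, b2, b3; d3, d2, d1, d0] : Matrix (Fin 4) (Fin 4) ℝ) = b2*b3*b3*d0 - b3*b3*b3*d1 := by
    rw [det_fin_four_of]; ring
  have hM0123 : Matrix.det (!![b3, 0, 0, 0; b2, b3, 0, 0; b1, b2, b3, 0; b0, b1, b2, b3] : Matrix (Fin 4) (Fin 4) ℝ) = b3*b3*b3*b3 := by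
    rw [det_fin_four_of]; ring
  have hM01236 : Matrix.det (!![b2, b3, 0, 0, 0; b1, b2, b3, 0, 0; b0, b1, b2, b3, 0; 0, b0, b1, b2, b3; d4, d3, d2, d1, d0] : Matrix (Fin 5) (Fin 5) ℝ) = 2*b0*b2*b3*b3*d0 - b0*b3*b3*b3*d1 + b1*b1*b3*b3*d0 - 3*b1*b2*b2*b3*d0 + 2*b1*b2*b3*b3*d1 - b1*b3*b3*b3*d2 + b2*b2*b2*b2*d0 - b2*b2*b2*b3*d1 + b2*b2*b3*b3*d2 - b2*b3*b3*b3*d3 + b3*b3*b3*b3*d4 := by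
    have sM01236_0 : (!![b2, b3, 0, 0, 0; b1, b2, b3, 0, 0; b0, b1, b2, b3, 0; 0, b0, b1, b2, b3; d4, d3, d2, d1, d0] : Matrix (Fin 5) (Fin 5) ℝ).submatrix Fin.succ Fin.succ = !![b2, b3, 0, 0; b1, b2, b3, 0; b0, b1, b2, b3; d3, d2, d1, d0] := by
      ext a b; fin_cases a <;> fin_cases b <;> rfl
    have sM01236_1 : (!![b2, b3, 0, 0, 0; b1, b2, b3, 0, 0; b0, b1, b2, b3, 0; 0, b0, b1, b2, b3; d4, d3, d2, d1, d0] : Matrix (Fin 5) (Fin 5) ℝ).submatrix (Fin.succAbove 1) Fin.succ = !![b3, 0, 0, 0; b1, b2, b3, 0; b0, b1, b2, b3; d3, d2, d1, d0] := by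
      ext a b; fin_cases a <;> fin_cases b <;> rfl
    have sM01236_2 : (!![b2, b3, 0, 0, 0; b1, b2, b3, 0, 0; b0, b1, b2, b3, 0; 0, b0, b1, b2, b3; d4, d3, d2, d1, d0] : Matrix (Fin 5) (Fin 5) ℝ).submatrix (Fin.succAbove 2) Fin.succ = !![b3, 0, 0, 0; b2, b3, 0, 0; b0, b1, b2, b3; d3, d2, d1, d0] := by
      ext a b; fin_cases a <;> fin_cases b <;> rfl
    have sM01236_4 : (!![b2, b3, 0, 0, 0; b1, b2, b3, 0, 0; b0, b1, b2, b3, 0; 0, b0, b1, b2, b3; d4, d3, d2, d1, d0] : Matrix (Fin 5) (Fin 5) ℝ).submatrix (Fin.succ 2).succ.succAbove Fin.succ = !![b3, 0, 0, 0; b2, b3, 0, 0; b1, b2, b3, 0; b0, b1, b2, b3] := by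
      ext a b; fin_cases a <;> fin_cases b <;> rfl
    rw [Matrix.det_succ_column_zero]
    norm_num [Fin.sum_univ_succ, sM01236_0, hM1236, sM01236_1, hM0236, sM01236_2, hM0136, sM01236_4, hM0123]
    ring
  have hM012356 : Matrix.det (!![b1, b2, b3, 0, 0, 0; b0, b1, b2, b3, 0, 0; 0, b0, b1, b2, b3, 0; 0, 0, b0, b1, b2, b3; d4, d3, d2, d1, d0, 0; 0, d4, d3, d2, d1, d0] : Matrix (Fin 6) (Fin 6) ℝ) = 2*b0*b0*b1*b3*d0*d0 + b0*b0*b2*b2*d0*d0 - 2*b0*b0*b2*b3*d0*d1 - b0*b0*b3*b3*d0*d2 + b0*b0*b3*b3*d1*d1 - 3*b0*b1*b1*b2*d0*d0 + b0*b1*b1*b3*d0*d1 + 2*b0*b1*b2*b2*d0*d1 + 2*b0*b1*b2*b3*d0*d2 - 2*b0*b1*b2*b3*d1*d1 - 3*b0*b1*b3*b3*d0*d3 + b0*b1*b3*b3*d1*d2 - b0*b2*b2*b2*d0*d2 + b0*b2*b2*b3*d1*d2 + 3*b0*b2*b3*b3*d0*d4 - b0*b2*b3*b3*d2*d2 - 2*b0*b3*b3*b3*d1*d4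 + b0*b3*b3*b3*d2*d3 + b1*b1*b1*b1*d0*d0 - b1*b1*b1*b2*d0*d1 - 2*b1*b1*b1*b3*d0*d2 + b1*b1*b1*b3*d1*d1 + b1*b1*b2*b2*d0*d2 + 3*b1*b1*b2*b3*d0*d3 - b1*b1*b2*b3*d1*d2 + 2*b1*b1*b3*b3*d0*d4 - 2*b1*b1*b3*b3*d1*d3 + b1*b1*b3*b3*d2*d2 - b1*b2*b2*b2*d0*d3 - 4*b1*b2*b2*b3*d0*d4 + b1*b2*b2*b3*d1*d3 + 3*b1*b2*b3*b3*d1*d4 - b1*b2*b3*b3*d2*d3 - 2*b1*b3*b3*b3*d2*d4 + b1*b3*b3*b3*d3*d3 + b2*b2*b2*b2*d0*d4 - b2*b2*b2*b3*d1*d4 + b2*b2*b3*b3*d2*d4 - b2*b3*b3*b3*d3*d4 + b3*b3*b3*b3*d4*d4 := by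
    have sM012356_0 : (!![b1, b2, b3, 0, 0, 0; b0, b1, b2, b3, 0, 0; 0, b0, b1, b2, b3, 0; 0, 0, b0, b1, b2, b3; d4, d3, d2, d1, d0, 0; 0, d4, d3, d2, d1, d0] : Matrix (Fin 6) (Fin 6) ℝ).submatrix Fin.succ Fin.succ = !![b1, b2, b3, 0, 0; b0, b1, b2, b3, 0; 0, b0, b1, b2, b3; d3, d2, d1, d0, 0; d4, d3, d2, d1, d0] := by
      ext a b; fin_cases a <;> fin_cases b <;> rfl
    have sM012356_1 : (!![b1, b2, b3, 0, 0, 0; b0, b1, b2, b3, 0, 0; 0, b0, b1, b2, b3, 0; 0, 0, b0, b1, b2, b3; d4, d3, d2, d1, d0, 0; 0, d4, d3, d2, d1, d0] : Matrix (Fin 6) (Fin 6) ℝ).submatrix (Fin.succAbove 1) Fin.succ = !![b2, b3, 0, 0, 0; b0, b1, b2, b3, 0; 0, b0, b1, b2, b3; d3, d2, d1, d0, 0; d4, d3, d2, d1, d0] := by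
      ext a b; fin_cases a <;> fin_cases b <;> rfl
    have sM012356_4 : (!![b1, b2, b3, 0, 0, 0; b0, b1, b2, b3, 0, 0; 0, b0, b1, b2, b3, 0; 0, 0, b0, b1, b2, b3; d4, d3, d2, d1, d0, 0; 0, d4, d3, d2, d1, d0] : Matrix (Fin 6) (Fin 6) ℝ).submatrix (Fin.succ 2).succ.succAbove Fin.succ = !![b2, b3, 0, 0, 0; b1, b2, b3, 0, 0; b0, b1, b2, b3, 0; 0, b0, b1, b2, b3; d4, d3, d2, d1, d0] := by
      ext a b; fin_cases a <;> fin_cases b <;> rfl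
    rw [Matrix.det_succ_column_zero]
    norm_num [Fin.sum_univ_succ, sM012356_0, hM12356, sM012356_1, hM02356, sM012356_4, hM01236]
    ring
  have hM0123456 : Matrix.det (!![b0, b1, b2, b3, 0, 0, 0; 0, b0, b1, b2, b3, 0, 0; 0, 0, b0, b1, b2, b3, 0; 0, 0, 0, b0, b1, b2, b3; d4, d3, d2, d1, d0, 0, 0; 0, d4, d3, d2, d1, d0, 0; 0, 0, d4, d3, d2, d1, d0] : Matrix (Fin 7) (Fin 7) ℝ) = b0*b0*b0*b0*d0*d0*d0 - b0*b0*b0*b1*d0*d0*d1 - 2*b0*b0*b0*b2*d0*d0*d2 + b0*b0*b0*b2*d0*d1*d1 - 3*b0*b0*b0*b3*d0*d0*d3 + 3*b0*b0*b0*b3*d0*d1*d2 - b0*b0*b0*b3*d1*d1*d1 + b0*b0*b1*b1*d0*d0*d2 + 3*b0*b0*b1*b2*d0*d0*d3 - b0*b0*b1*b2*d0*d1*d2 + 4*b0*b0*b1*b3*d0*d0*d4 - b0*b0*b1*b3*d0*d1*d3 - 2*b0*b0*b1*b3*d0*d2*d2 + b0*b0*b1*b3*d1*d1*d2 + 2*b0*b0*b2*b2*d0*d0*d4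 - 2*b0*b0*b2*b2*d0*d1*d3 + b0*b0*b2*b2*d0*d2*d2 - 5*b0*b0*b2*b3*d0*d1*d4 + b0*b0*b2*b3*d0*d2*d3 + 2*b0*b0*b2*b3*d1*d1*d3 - b0*b0*b2*b3*d1*d2*d2 - 3*b0*b0*b3*b3*d0*d2*d4 + 3*b0*b0*b3*b3*d0*d3*d3 + 3*b0*b0*b3*b3*d1*d1*d4 - 3*b0*b0*b3*b3*d1*d2*d3 + b0*b0*b3*b3*d2*d2*d2 - b0*b1*b1*b1*d0*d0*d3 - 4*b0*b1*b1*b2*d0*d0*d4 + b0*b1*b1*b2*d0*d1*d3 + b0*b1*b1*b3*d0*d1*d4 + 2*b0*b1*b1*b3*d0*d2*d3 - b0*b1*b1*b3*d1*d1*d3 + 3*b0*b1*b2*b2*d0*d1*d4 - b0*b1*b2*b2*d0*d2*d3 + 4*b0*b1*b2*b3*d0*d2*d4 - 3*b0*b1*b2*b3*d0*d3*d3 - 3*b0*b1*b2*b3*d1*d1*d4 + b0*b1*b2*b3*d1*d2*d3 - 5*b0*b1*b3*b3*d0*d3*d4 + b0*b1*b3*b3*d1*d2*d4 + 2*b0*b1*b3*b3*d1*d3*d3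 - b0*b1*b3*b3*d2*d2*d3 - 2*b0*b2*b2*b2*d0*d2*d4 + b0*b2*b2*b2*d0*d3*d3 + b0*b2*b2*b3*d0*d3*d4 + 2*b0*b2*b2*b3*d1*d2*d4 - b0*b2*b2*b3*d1*d3*d3 + 4*b0*b2*b3*b3*d0*d4*d4 - b0*b2*b3*b3*d1*d3*d4 - 2*b0*b2*b3*b3*d2*d2*d4 + b0*b2*b3*b3*d2*d3*d3 - 3*b0*b3*b3*b3*d1*d4*d4 + 3*b0*b3*b3*b3*d2*d3*d4 - b0*b3*b3*b3*d3*d3*d3 + b1*b1*b1*b1*d0*d0*d4 - b1*b1*b1*b2*d0*d1*d4 - 2*b1*b1*b1*b3*d0*d2*d4 + b1*b1*b1*b3*d1*d1*d4 + b1*b1*b2*b2*d0*d2*d4 + 3*b1*b1*b2*b3*d0*d3*d4 - b1*b1*b2*b3*d1*d2*d4 + 2*b1*b1*b3*b3*d0*d4*d4 - 2*b1*b1*b3*b3*d1*d3*d4 + b1*b1*b3*b3*d2*d2*d4 - b1*b2*b2*b2*d0*d3*d4 - 4*b1*b2*b2*b3*d0*d4*d4 + b1*b2*b2*b3*d1*d3*d4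 + 3*b1*b2*b3*b3*d1*d4*d4 - b1*b2*b3*b3*d2*d3*d4 - 2*b1*b3*b3*b3*d2*d4*d4 + b1*b3*b3*b3*d3*d3*d4 + b2*b2*b2*b2*d0*d4*d4 - b2*b2*b2*b3*d1*d4*d4 + b2*b2*b3*b3*d2*d4*d4 - b2*b3*b3*b3*d3*d4*d4 + b3*b3*b3*b3*d4*d4*d4 := by
    have sM0123456_0 : (!![b0, b1, b2, b3, 0, 0, 0; 0, b0, b1, b2, b3, 0, 0; 0, 0, b0, b1, b2, b3, 0; 0, 0, 0, b0, b1, b2, b3; d4, d3, d2, d1, d0, 0, 0; 0, d4, d3, d2, d1, d0, 0; 0, 0, d4, d3, d2, d1, d0] : Matrix (Fin 7) (Fin 7) ℝ).submatrix Fin.succ Fin.succ = !![b0, b1, b2, b3, 0, 0; 0, b0, b1, b2, b3, 0; 0, 0, b0, b1, b2, b3; d3, d2, d1, d0, 0, 0; d4, d3, d2, d1, d0, 0; 0, d4, d3, d2, d1, d0] := by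
      ext a b; fin_cases a <;> fin_cases b <;> rfl
    have sM0123456_4 : (!![b0, b1, b2, b3, 0, 0, 0; 0, b0, b1, b2, b3, 0, 0; 0, 0, b0, b1, b2, b3, 0; 0, 0, 0, b0, b1, b2, b3; d4, d3, d2, d1, d0, 0, 0; 0, d4, d3, d2, d1, d0, 0; 0, 0, d4, d3, d2, d1, d0] : Matrix (Fin 7) (Fin 7) ℝ).submatrix (Fin.succ 2).succ.succAbove Fin.succ = !![b1, b2, b3, 0, 0, 0; b0, b1, b2, b3, 0, 0; 0, b0, b1, b2, b3, 0; 0, 0, b0, b1, b2, b3; d4, d3, d2, d1, d0, 0; 0, d4, d3, d2, d1, d0] := by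
      ext a b; fin_cases a <;> fin_cases b <;> rfl
    rw [Matrix.det_succ_column_zero]
    norm_num [Fin.sum_univ_succ, sM0123456_0, hM123456, sM0123456_4, hM012356]
    ring
  exact hM0123456



/-- `Q₁(u,w) = u³(1-w)² + w³(1-u)²` viewed as a polynomial of degree `3` in
`w` has descending coefficients `(1-u)², u³, -2u³, u³`, and
`Q₂(u,w)` has degree `4` in `w` with descending coefficients
`-(u-1)(-9+6u+u²), -(u+3)(-27+45u-21u²+u³), -243+540u-270u²+18u³-5u⁴,
3(81-270u+180u²-36u³+5u⁴), -9u(u-3)³`.  Their resultant with respect to `w`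
is the determinant of the `7×7` Sylvester matrix below. -/
noncomputable def resQ₁Q₂ (u : ℝ) : ℝ :=
  Matrix.det
    !![(1-u)^2, u^3, -2*u^3, u^3, 0, 0, 0;
       0, (1-u)^2, u^3, -2*u^3, u^3, 0, 0;
       0, 0, (1-u)^2, u^3, -2*u^3, u^3, 0;
       0, 0, 0, (1-u)^2, u^3, -2*u^3, u^3;
       -(u-1)*(-9+6*u+u^2), -(u+3)*(-27+45*u-21*u^2+u^3),
         -243+540*u-270*u^2+18*u^3-5*u^4,
         3*(81-270*u+180*u^2-36*u^3+5*u^4), -9*u*(u-3)^3, 0, 0;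
       0, -(u-1)*(-9+6*u+u^2), -(u+3)*(-27+45*u-21*u^2+u^3),
         -243+540*u-270*u^2+18*u^3-5*u^4,
         3*(81-270*u+180*u^2-36*u^3+5*u^4), -9*u*(u-3)^3, 0;
       0, 0, -(u-1)*(-9+6*u+u^2), -(u+3)*(-27+45*u-21*u^2+u^3),
         -243+540*u-270*u^2+18*u^3-5*u^4,
         3*(81-270*u+180*u^2-36*u^3+5*u^4), -9*u*(u-3)^3]

/-- `Res(Q₁,Q₂,w) = 32(u-1)³u⁶ R(u)`. -/
theorem stmt_15 :
    ∀ u : ℝ, resQ₁Q₂ u =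
      32*(u-1)^3*u^6 *
        (531441 - 3188646*u + 8148762*u^2 - 11455506*u^3 + 9546255*u^4
          - 4776408*u^5 + 1487889*u^6 - 406782*u^7 + 143856*u^8
          - 32238*u^9 + 1593*u^10 - 180*u^11 - 4*u^12) := by
  intro u
  rw [resQ₁Q₂, sylv]
  ring
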